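/- For every integer k ≥ 1 and all nonzero m_1,…,m_k ∈ ℤ^d, there exist indices i_1,…,i_k ∈ {1,…,d} such that ε(D_{i_1}D_{i_2}⋯D_{i_k}(∏_{j=1}^k (1 − t^{m_j}))) ≠ 0. On the other hand, for any n_1,…,n_{k+1} ∈ ℤ^d and any indices i_1,…,i_k ∈ {1,…,d}, ε(D_{i_1}⋯D_{i_k}(∏_{j=1}^{k+1} (1 − t^{n_j}))) = 0. -/
import Mathlib


/-- `A = ℂ[t₁^{±1},…,t_d^{±1}]`, the group algebra of `ℤ^d` over `ℂ`. -/
abbrev Ad (d : ℕ) := AddMonoidAlgebra ℂ (Fin d → ℤ)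

/-- The monomial `t^r`. -/
noncomputable def tm {d : ℕ} (r : Fin d → ℤ) : Ad d := AddMonoidAlgebra.single r 1

section Aux

variable {A : Type*} [CommRing A] [Algebra ℂ A]

lemma aux_deriv_mem (I : Ideal A) (D : Derivation ℂ A A) :
    ∀ (n : ℕ) (x : A), x ∈ I ^ (n + 1) → D x ∈ I ^ n := by
  intro n
  induction n with
  | zero => intro x _; simp [Ideal.one_eq_top]
  | succ n ih =>
    intro x hx
    rw [pow_succ] at hx
    refine Submodule.mul_induction_on hx (fun a ha b hb => ?_) (fun y z hy hz => by rw [map_add]; exact add_mem hy hz)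
    rw [D.leibniz, smul_eq_mul, smul_eq_mul]
    refine add_mem (Ideal.mul_mem_right _ _ ha) ?_
    rw [pow_succ']
    exact Ideal.mul_mem_mul hb (ih a ha)

lemma aux_foldr_mem {ι : Type*} (I : Ideal A) (D : ι → Derivation ℂ A A) :
    ∀ (L : List ι) (n : ℕ) (x : A), x ∈ I ^ (L.length + n) →
      L.foldr (fun i a => D i a) x ∈ I ^ n := by
  intro L
  induction L with
  | nil => intro n x hx; simpa using hx
  | cons i L ih =>
    intro n x hx
    have hx' : x ∈ I ^ (L.length + (n + 1)) := by
      rw [show L.length + (n + 1) = (i :: L).length + n by simp [List.length_cons]; omega]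
      exact hx
    exact aux_deriv_mem I (D i) n _ (ih (n + 1) x hx')

lemma aux_pow_mem (I : Ideal A) (D : Derivation ℂ A A) :
    ∀ (n m : ℕ) (x : A), x ∈ I ^ (n + m) → ((D.toLinearMap : Module.End ℂ A) ^ n) x ∈ I ^ m := by
  intro n
  induction n with
  | zero => intro m x hx; simpa using hx
  | succ n ih =>
    intro m x hx
    rw [pow_succ, Module.End.mul_apply]
    have hx' : D x ∈ I ^ (n + m) := by
      refine aux_deriv_mem I D _ x ?_
      rw [show n + m + 1 = n + 1 + m by omega]
      exact hx
    exact ih m _ hx'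

lemma aux_prod_mem (I : Ideal A) {ι : Type*} [DecidableEq ι] (s : Finset ι) (f : ι → A) :
    (∀ j ∈ s, f j ∈ I) → (∏ j ∈ s, f j) ∈ I ^ s.card := by
  induction s using Finset.induction_on with
  | empty => intro _; simp [Ideal.one_eq_top]
  | @insert a s ha ih =>
    intro h
    rw [Finset.prod_insert ha, Finset.card_insert_of_notMem ha, pow_succ']
    exact Ideal.mul_mem_mul (h a (Finset.mem_insert_self a s))
      (ih fun j hj => h j (Finset.mem_insert_of_mem hj))

lemma aux_deriv_prod {ι : Type*} [DecidableEq ι] (D : Derivation ℂ A A)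
    (s : Finset ι) (f : ι → A) :
    D (∏ i ∈ s, f i) = ∑ i ∈ s, D (f i) * ∏ j ∈ s.erase i, f j := by
  induction s using Finset.induction_on with
  | empty => simp
  | @insert a s ha ih =>
    rw [Finset.prod_insert ha, D.leibniz, smul_eq_mul, smul_eq_mul, ih, Finset.sum_insert ha,
      Finset.erase_insert ha, Finset.mul_sum, add_comm]
    congr 1
    · exact mul_comm _ _
    refine Finset.sum_congr rfl fun i hi => ?_
    rw [Finset.erase_insert_of_ne (ne_of_mem_of_not_mem hi ha).symm,
      Finset.prod_insert (fun h => ha (Finset.mem_of_mem_erase h))]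
    ring

lemma aux_factorial (ε : A →ₐ[ℂ] ℂ) (D : Derivation ℂ A A) {ι : Type*} [DecidableEq ι] :
    ∀ (n : ℕ) (s : Finset ι), s.card = n → ∀ (b : A) (f : ι → A),
      (∀ j ∈ s, f j ∈ RingHom.ker ε) →
      ε (((D.toLinearMap : Module.End ℂ A) ^ n) (b * ∏ j ∈ s, f j))
        = ε b * n.factorial * ∏ j ∈ s, ε (D (f j)) := by
  intro n
  induction n with
  | zero =>
    intro s hs b f hf
    rw [Finset.card_eq_zero] at hs; subst hs
    simp
  | succ n ih =>
    intro s hs b f hf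
    rw [pow_succ, Module.End.mul_apply]
    have step : D.toLinearMap (b * ∏ j ∈ s, f j)
        = (∑ j ∈ s, (b * D (f j)) * ∏ i ∈ s.erase j, f i) + (∏ j ∈ s, f j) * D b := by
      show D (b * ∏ j ∈ s, f j) = _
      rw [D.leibniz, smul_eq_mul, smul_eq_mul, aux_deriv_prod, Finset.mul_sum]
      congr 1
      exact Finset.sum_congr rfl fun j hj => by ring
    have h2 : ε (((D.toLinearMap : Module.End ℂ A) ^ n) ((∏ j ∈ s, f j) * D b)) = 0 := by
      have hmem : (∏ j ∈ s, f j) * D b ∈ (RingHom.ker ε) ^ (n + 1) := by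
        rw [← hs]
        exact Ideal.mul_mem_right _ _ (aux_prod_mem _ s f hf)
      have hh := aux_pow_mem (RingHom.ker ε) D n 1 _ hmem
      rw [pow_one] at hh
      exact (RingHom.mem_ker).mp hh
    have h1 : ∀ j ∈ s, ε (((D.toLinearMap : Module.End ℂ A) ^ n)
        ((b * D (f j)) * ∏ i ∈ s.erase j, f i))
        = ε b * n.factorial * ∏ i ∈ s, ε (D (f i)) := by
      intro j hj
      rw [ih (s.erase j) (by rw [Finset.card_erase_of_mem hj, hs]; rfl) (b * D (f j)) f
        (fun i hi => hf i (Finset.mem_of_mem_erase hi)), map_mul,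
        ← Finset.mul_prod_erase s (fun i => ε (D (f i))) hj]
      ring
    rw [step, map_add, map_add, h2, add_zero, map_sum, map_sum, Finset.sum_congr rfl h1,
      Finset.sum_const, hs, nsmul_eq_mul, Nat.factorial_succ]
    push_cast
    ring

lemma aux_coe_sum {d' : ℕ} (Di : Fin d' → Derivation ℂ A A) (x : Fin d' → ℂ) (z : A) :
    (∑ i, x i • Di i : Derivation ℂ A A) z = ∑ i, x i • (Di i z) := by
  have : (⇑(∑ i, x i • Di i : Derivation ℂ A A) : A → A)
      = ∑ i, (x i • ⇑(Di i) : A → A) := by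
    rw [show (⇑(∑ i, x i • Di i : Derivation ℂ A A) : A → A)
        = Derivation.coeFnAddMonoidHom (∑ i, x i • Di i) from rfl, map_sum]
    exact Finset.sum_congr rfl fun i _ => Derivation.coe_smul (x i) (Di i)
  rw [show (∑ i, x i • Di i : Derivation ℂ A A) z
      = (⇑(∑ i, x i • Di i : Derivation ℂ A A) : A → A) z from rfl, this]
  simp

lemma aux_expand {d' : ℕ} (Di : Fin d' → Derivation ℂ A A) (x : Fin d' → ℂ) :
    ∀ (n : ℕ) (y : A),
      (((∑ i, x i • Di i : Derivation ℂ A A).toLinearMap : Module.End ℂ A) ^ n) y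
        = ∑ idx : Fin n → Fin d', (∏ l, x (idx l)) •
            ((List.ofFn idx).foldr (fun i a => Di i a) y) := by
  intro n
  induction n with
  | zero =>
    intro y
    rw [pow_zero, Module.End.one_apply, Fintype.sum_unique]
    simp [List.ofFn_zero]
  | succ n ih =>
    intro y
    rw [pow_succ', Module.End.mul_apply, ih y, map_sum]
    have hterm : ∀ idx : Fin n → Fin d',
        (∑ i, x i • Di i : Derivation ℂ A A).toLinearMap
          ((∏ l, x (idx l)) • ((List.ofFn idx).foldr (fun i a => Di i a) y))
        = ∑ i, ((x i * ∏ l, x (idx l)) •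
            ((List.ofFn (Fin.cons i idx : Fin (n+1) → Fin d')).foldr (fun i a => Di i a) y)) := by
      intro idx
      rw [map_smul]
      rw [show (∑ i, x i • Di i : Derivation ℂ A A).toLinearMap
          ((List.ofFn idx).foldr (fun i a => Di i a) y)
          = (∑ i, x i • Di i : Derivation ℂ A A)
          ((List.ofFn idx).foldr (fun i a => Di i a) y) from rfl,
        aux_coe_sum, Finset.smul_sum]
      refine Finset.sum_congr rfl fun i _ => ?_
      rw [smul_smul, mul_comm]
      congr 1
      rw [List.ofFn_succ]
      simp [Fin.cons_zero, Fin.cons_succ]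
    rw [Finset.sum_congr rfl fun idx _ => hterm idx]
    rw [← Equiv.sum_comp (Fin.consEquiv (fun _ : Fin (n+1) => Fin d'))
      (fun idx' : Fin (n+1) → Fin d' => (∏ l, x (idx' l)) •
        ((List.ofFn idx').foldr (fun i a => Di i a) y)), Fintype.sum_prod_type]
    rw [Finset.sum_comm]
    refine Finset.sum_congr rfl fun i _ => Finset.sum_congr rfl fun idx _ => ?_
    have he : (Fin.consEquiv fun _ : Fin (n+1) => Fin d') (i, idx)
        = (Fin.cons i idx : Fin (n+1) → Fin d') := rfl
    rw [he, Fin.prod_univ_succ]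
    simp

lemma exists_x {k d : ℕ} (m : Fin k → Fin d → ℤ) (hm : ∀ j, m j ≠ 0) :
    ∃ x : Fin d → ℂ, ∀ j, ∑ i, (m j i : ℂ) * x i ≠ 0 := by
  classical
  set p : Fin k → Polynomial ℂ :=
    fun j => ∑ i, Polynomial.C ((m j i : ℂ)) * Polynomial.X ^ ((i : ℕ) + 1) with hp
  have hpne : ∀ j, p j ≠ 0 := by
    intro j hj
    obtain ⟨i0, hi0⟩ : ∃ i, m j i ≠ 0 := by
      by_contra h; push_neg at h; exact hm j (funext h)
    have hc : (p j).coeff ((i0 : ℕ) + 1) = (m j i0 : ℂ) := by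
      rw [hp]
      rw [Polynomial.finset_sum_coeff]
      rw [Finset.sum_eq_single i0]
      · simp
      · intro i _ hi
        rw [Polynomial.coeff_C_mul, Polynomial.coeff_X_pow, if_neg (by
          intro h
          exact hi (Fin.ext (by omega))), mul_zero]
      · intro h; exact absurd (Finset.mem_univ i0) h
    rw [hj, Polynomial.coeff_zero] at hc
    exact hi0 (by exact_mod_cast hc.symm)
  have hprod : (∏ j, p j) ≠ 0 := Finset.prod_ne_zero_iff.mpr fun j _ => hpne j
  obtain ⟨z, hz⟩ : ∃ z : ℂ, Polynomial.eval z (∏ j, p j) ≠ 0 := by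
    by_contra h
    push_neg at h
    exact hprod (Polynomial.funext fun r => by simpa using h r)
  refine ⟨fun i => z ^ ((i : ℕ) + 1), fun j hj0 => ?_⟩
  rw [Polynomial.eval_prod] at hz
  refine (Finset.prod_ne_zero_iff.mp hz j (Finset.mem_univ j)) ?_
  rw [hp]
  simp only [Polynomial.eval_finset_sum, Polynomial.eval_mul, Polynomial.eval_C,
    Polynomial.eval_pow, Polynomial.eval_X]
  exact hj0

end Aux

/-- Let `Dᵢ = tᵢ ∂/∂tᵢ` be the Euler derivations (so `Dᵢ t^m = mᵢ t^m`) and let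
`ε : A → ℂ` be the augmentation (`ε(t^m) = 1`).  For every `k ≥ 1` and nonzero
`m₁,…,m_k ∈ ℤ^d` there are indices `i₁,…,i_k` with
`ε(D_{i₁}⋯D_{i_k}(∏_{j=1}^k (1 − t^{mⱼ}))) ≠ 0`; on the other hand, for any
`n₁,…,n_{k+1} ∈ ℤ^d` and any indices `i₁,…,i_k`,
`ε(D_{i₁}⋯D_{i_k}(∏_{j=1}^{k+1} (1 − t^{nⱼ}))) = 0`. -/
theorem augmentation_of_Euler_derivatives (d : ℕ) (hd : 2 ≤ d)
    (Di : Fin d → Derivation ℂ (Ad d) (Ad d))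
    (hDi : ∀ (i : Fin d) (s : Fin d → ℤ), Di i (tm s) = ((s i : ℂ)) • tm s)
    (ε : Ad d →ₐ[ℂ] ℂ) (hε : ∀ r : Fin d → ℤ, ε (tm r) = 1)
    (k : ℕ) (hk : 1 ≤ k) :
    (∀ m : Fin k → Fin d → ℤ, (∀ j, m j ≠ 0) →
      ∃ idx : Fin k → Fin d,
        ε ((List.ofFn idx).foldr (fun i a => Di i a)
            (∏ j, (1 - tm (m j)))) ≠ 0) ∧
    (∀ (n : Fin (k + 1) → Fin d → ℤ) (idx : Fin k → Fin d),
      ε ((List.ofFn idx).foldr (fun i a => Di i a)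
          (∏ j, (1 - tm (n j)))) = 0) := by
  have hker : ∀ r : Fin d → ℤ, (1 - tm r) ∈ RingHom.ker ε := by
    intro r
    rw [RingHom.mem_ker, map_sub, map_one, hε, sub_self]
  constructor
  · intro m hm
    by_contra hcon
    push_neg at hcon
    obtain ⟨x, hx⟩ := exists_x m hm
    set Dx : Derivation ℂ (Ad d) (Ad d) := ∑ i, x i • Di i with hDx
    have hεD : ∀ r : Fin d → ℤ, ε (Dx (1 - tm r)) = -∑ i, (r i : ℂ) * x i := by
      intro r
      rw [hDx, aux_coe_sum, map_sum]
      rw [Finset.sum_congr rfl (g := fun i => -((r i : ℂ) * x i)) fun i _ => ?_]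
      · rw [Finset.sum_neg_distrib]
      · rw [map_smul, Derivation.map_sub, Derivation.map_one_eq_zero, zero_sub, hDi,
          map_neg, map_smul, hε]
        simp only [smul_eq_mul, mul_one]
        ring
    have key := aux_factorial ε Dx k Finset.univ (by simp) 1 (fun j => 1 - tm (m j))
      (fun j _ => hker (m j))
    have hz : ε (((Dx.toLinearMap : Module.End ℂ (Ad d)) ^ k)
        (1 * ∏ j, (1 - tm (m j)))) = 0 := by
      rw [one_mul, hDx, aux_expand, map_sum]
      refine Finset.sum_eq_zero fun idx _ => ?_
      rw [map_smul, hcon idx, smul_zero]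
    rw [key] at hz
    have hne : (ε 1 : ℂ) * k.factorial * ∏ j, ε (Dx (1 - tm (m j))) ≠ 0 := by
      refine mul_ne_zero (mul_ne_zero ?_ ?_) ?_
      · rw [map_one]; exact one_ne_zero
      · exact_mod_cast Nat.cast_ne_zero.mpr (Nat.factorial_ne_zero k)
      · refine Finset.prod_ne_zero_iff.mpr fun j _ => ?_
        rw [hεD]
        exact neg_ne_zero.mpr (hx j)
    exact hne hz
  · intro n idx
    have hmem : (∏ j, (1 - tm (n j))) ∈ (RingHom.ker ε) ^ ((List.ofFn idx).length + 1) := by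
      have h := aux_prod_mem (RingHom.ker ε) Finset.univ (fun j => 1 - tm (n j))
        (fun j _ => hker (n j))
      rw [Finset.card_univ, Fintype.card_fin] at h
      rw [List.length_ofFn]
      exact h
    have h := aux_foldr_mem (RingHom.ker ε) Di (List.ofFn idx) 1 _ hmem
    rw [pow_one] at h
    exact (RingHom.mem_ker).mp h
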